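/- Let N be a nonnegative-integer-valued random variable with E[N] = c where c is not an integer, write m = ⌊c⌋ and r = c - ⌊c⌋, and let p ∈ (0,1). Then E[(1-p)^N] ≥ (1-r)(1-p)^m + r(1-p)^{m+1}, i.e., the two-point distribution supported on {⌊c⌋, ⌈c⌉} with P(N=⌈c⌉) = c - ⌊c⌋ minimizes E[(1-p)^N] among all distributions with mean c. -/
import Mathlib

/-- Key pointwise convexity inequality: the secant line of `q^x` through
integers `m` and `m+1` lies below `q^n` at every natural `n`. -/
lemma key_pointwise (q : ℝ) (hq0 : 0 < q) (hq1 : q < 1) (m n : ℕ) :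
    q ^ m * (1 - (1 - q) * ((n : ℝ) - m)) ≤ q ^ n := by
  rcases le_or_gt m n with h | h
  · obtain ⟨k, rfl⟩ := Nat.exists_eq_add_of_le h
    have hb : 1 + (k : ℝ) * (q - 1) ≤ q ^ k := by
      have := one_add_mul_le_pow (a := q - 1) (by nlinarith) k
      simpa using this
    have h1 : 1 - (1 - q) * (((m + k : ℕ) : ℝ) - m) = 1 + (k : ℝ) * (q - 1) := by
      push_cast; ring
    rw [h1, pow_add]
    exact mul_le_mul_of_nonneg_left hb (pow_nonneg hq0.le m)
  · obtain ⟨k, rfl⟩ := Nat.exists_eq_add_of_lt h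
    set pp := 1 - q with hpp
    have hpp0 : 0 < pp := by simp [hpp]; linarith
    have hb : 1 + (k + 1 : ℝ) * pp ≤ (1 + pp) ^ (k + 1) := by
      have := one_add_mul_le_pow (a := pp) (by linarith) (k + 1)
      simpa using this
    have hmain : q ^ (k + 1) * (1 + ((k : ℝ) + 1) * pp) ≤ 1 := by
      have h2 : q ^ (k + 1) * (1 + pp) ^ (k + 1) ≤ 1 := by
        have : (q * (1 + pp)) ^ (k + 1) ≤ 1 := by
          apply pow_le_one₀
          · nlinarith
          · nlinarith
        rw [← mul_pow]; exact this
      calc q ^ (k + 1) * (1 + ((k : ℝ) + 1) * pp)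
          ≤ q ^ (k + 1) * (1 + pp) ^ (k + 1) := by
            apply mul_le_mul_of_nonneg_left _ (pow_nonneg hq0.le _)
            simpa using hb
        _ ≤ 1 := h2
    have h1 : ((n + k + 1 : ℕ) : ℝ) - n = (k : ℝ) + 1 := by push_cast; ring
    calc q ^ (n + k + 1) * (1 - (1 - q) * (((n : ℝ)) - (n + k + 1 : ℕ)))
        = q ^ n * (q ^ (k + 1) * (1 + ((k : ℝ) + 1) * pp)) := by
          have hpow : q ^ (n + k + 1) = q ^ n * q ^ (k + 1) := by
            ring
          rw [hpow, hpp]; push_cast; ring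
      _ ≤ q ^ n * 1 := mul_le_mul_of_nonneg_left hmain (pow_nonneg hq0.le n)
      _ = q ^ n := mul_one _

/-- If `N` has mean `c` which is not an integer, with `m = ⌊c⌋` and `r = c - ⌊c⌋`,
then `E[(1-p)^N] ≥ (1-r)(1-p)^m + r(1-p)^(m+1)`. -/
theorem two_point_minimizes_exponential_moment
    (p : ℝ) (hp : 0 < p) (hp1 : p < 1) (c : ℝ) (hc : 0 < c)
    (hci : (⌊c⌋₊ : ℝ) ≠ c)
    (f : ℕ → ℝ) (hf : ∀ n, 0 ≤ f n) (hsum : ∑' n : ℕ, f n = 1)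
    (hmean_summable : Summable (fun n : ℕ => (n : ℝ) * f n))
    (hmean : ∑' n : ℕ, (n : ℝ) * f n = c) :
    (1 - (c - ⌊c⌋₊)) * (1 - p) ^ ⌊c⌋₊ + (c - ⌊c⌋₊) * (1 - p) ^ (⌊c⌋₊ + 1)
      ≤ ∑' n : ℕ, f n * (1 - p) ^ n := by
  set q := 1 - p with hq
  have hq0 : 0 < q := by simp [hq]; linarith
  have hq1 : q < 1 := by simp [hq]; linarith
  set m := ⌊c⌋₊ with hm
  have hfs : Summable f := by
    by_contra h
    rw [tsum_eq_zero_of_not_summable h] at hsum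
    norm_num at hsum
  -- summable RHS
  have hqn1 : ∀ n : ℕ, q ^ n ≤ 1 := fun n => pow_le_one₀ hq0.le hq1.le
  have hrhs : Summable (fun n : ℕ => f n * q ^ n) := by
    apply Summable.of_nonneg_of_le (fun n => mul_nonneg (hf n) (pow_nonneg hq0.le n))
      (fun n => ?_) hfs
    calc f n * q ^ n ≤ f n * 1 := mul_le_mul_of_nonneg_left (hqn1 n) (hf n)
      _ = f n := mul_one _
  -- lower bound function g
  set A : ℝ := q ^ m * (1 + (1 - q) * m) with hA
  set B : ℝ := q ^ m * (1 - q) with hB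
  have hlhs : Summable (fun n : ℕ => A * f n - B * ((n : ℝ) * f n)) :=
    ((hfs.mul_left A).sub (hmean_summable.mul_left B))
  have hle : ∀ n : ℕ, A * f n - B * ((n : ℝ) * f n) ≤ f n * q ^ n := by
    intro n
    have hk := key_pointwise q hq0 hq1 m n
    have : f n * (q ^ m * (1 - (1 - q) * ((n : ℝ) - m))) ≤ f n * q ^ n :=
      mul_le_mul_of_nonneg_left hk (hf n)
    calc A * f n - B * ((n : ℝ) * f n)
        = f n * (q ^ m * (1 - (1 - q) * ((n : ℝ) - m))) := by rw [hA, hB]; ring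
      _ ≤ f n * q ^ n := this
  have hsum_le := Summable.tsum_le_tsum hle hlhs hrhs
  have hcalc : ∑' n : ℕ, (A * f n - B * ((n : ℝ) * f n)) = A - B * c := by
    rw [Summable.tsum_sub (hfs.mul_left A) (hmean_summable.mul_left B),
      tsum_mul_left, tsum_mul_left, hsum, hmean, mul_one]
  rw [hcalc] at hsum_le
  refine le_trans (le_of_eq ?_) hsum_le
  rw [hA, hB, pow_succ]
  ring
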